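/- Improper Fourier transform of the sinc function: let W > 0 and δ = 1/(2W). For every real ξ with |ξ| < W, lim_{T→∞} ∫_{−T}^{T} sinc(x/δ) e^{−2πiξx} dx = δ; and for every real ξ with |ξ| > W, lim_{T→∞} ∫_{−T}^{T} sinc(x/δ) e^{−2πiξx} dx = 0. -/

import Mathlib

open Real Filter MeasureTheory Set intervalIntegral

/-- The normalized _root_.sinc function `_root_.sinc x = sin(πx)/(πx)`, with `_root_.sinc 0 = 1`. -/
noncomputable def sinc (x : ℝ) : ℝ := if x = 0 then 1 else Real.sin (π * x) / (π * x)


lemma sinc_even (x : ℝ) : _root_.sinc (-x) = _root_.sinc x := by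
  unfold _root_.sinc
  rcases eq_or_ne x 0 with h | h
  · simp [h]
  · rw [if_neg (neg_ne_zero.mpr h), if_neg h, mul_neg, Real.sin_neg, neg_div_neg_eq]

lemma tendsto_sin_div : Filter.Tendsto (fun y : ℝ => Real.sin y / y) (nhdsWithin 0 {(0:ℝ)}ᶜ) (nhds 1) := by
  have h := (Real.hasDerivAt_sin 0)
  rw [Real.cos_zero, hasDerivAt_iff_tendsto_slope] at h
  convert h using 2 with y
  simp [slope_def_field, div_eq_div_iff]

lemma continuous_sinc : Continuous _root_.sinc := by
  rw [continuous_iff_continuousAt]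
  intro x
  rcases eq_or_ne x 0 with rfl | hx
  · rw [ContinuousAt, show _root_.sinc 0 = 1 from if_pos rfl]
    rw [← nhdsNE_sup_pure (0:ℝ), Filter.tendsto_sup]
    constructor
    · have key : Filter.Tendsto (fun y : ℝ => Real.sin (π * y) / (π * y)) (nhdsWithin 0 {(0:ℝ)}ᶜ) (nhds 1) := by
        apply tendsto_sin_div.comp
        apply tendsto_nhdsWithin_of_tendsto_nhds_of_eventually_within
        · exact (((continuous_const.mul continuous_id).tendsto' 0 0 (by simp)).mono_left
            nhdsWithin_le_nhds)
        · filter_upwards [self_mem_nhdsWithin] with y hy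
          simp only [mem_compl_iff, mem_singleton_iff] at hy ⊢
          exact fun h => hy (by simpa [Real.pi_ne_zero] using h)
      apply key.congr'
      filter_upwards [self_mem_nhdsWithin] with y hy
      exact (if_neg hy).symm
    · simpa [_root_.sinc] using tendsto_pure_nhds _root_.sinc 0
  · have : ∀ᶠ y in nhds x, _root_.sinc y = Real.sin (π * y) / (π * y) := by
      filter_upwards [isOpen_ne.mem_nhds hx] with y hy
      exact if_neg hy
    rw [continuousAt_congr this]
    exact ContinuousAt.div (by fun_prop) (by fun_prop) (by positivity)

lemma integral_sin_exp (t T : ℝ) :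
    ∫ x in (0:ℝ)..T, Real.sin x * Real.exp (-(x*t))
      = (1 - Real.exp (-(T*t)) * (Real.cos T + t * Real.sin T)) / (1 + t^2) := by
  have hd : ∀ x ∈ Set.uIcc (0:ℝ) T,
      HasDerivAt (fun x => Real.exp (-(x*t)) * (-(t * Real.sin x) - Real.cos x) / (1 + t^2))
        (Real.sin x * Real.exp (-(x*t))) x := by
    intro x _
    have h1 : HasDerivAt (fun x : ℝ => -(x*t)) (-t) x := by
      simpa [Pi.neg_def] using ((hasDerivAt_id x).mul_const t).neg
    have h2 : HasDerivAt (fun x : ℝ => Real.exp (-(x*t))) (Real.exp (-(x*t)) * (-t)) x :=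
      (Real.hasDerivAt_exp _).comp x h1
    have h3 : HasDerivAt (fun x : ℝ => -(t * Real.sin x) - Real.cos x)
        (-(t * Real.cos x) - (-Real.sin x)) x :=
      (((Real.hasDerivAt_sin x).const_mul t).neg).sub (Real.hasDerivAt_cos x)
    have h4 := (h2.mul h3).div_const (1 + t^2)
    refine h4.congr_deriv ?_
    have ht : (1 + t^2) ≠ 0 := by positivity
    field_simp
    ring
  have hc : IntervalIntegrable (fun x => Real.sin x * Real.exp (-(x*t))) volume 0 T :=
    (Real.continuous_sin.mul (Real.continuous_exp.comp (by fun_prop))).intervalIntegrable 0 T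
  rw [intervalIntegral.integral_eq_sub_of_hasDerivAt hd hc]
  have ht : (1 + t^2) ≠ 0 := by positivity
  field_simp
  simp only [zero_mul, mul_zero, neg_zero, Real.exp_zero, Real.sin_zero, Real.cos_zero]; ring

lemma integral_exp_neg_mul {x : ℝ} (hx : 0 < x) :
    ∫ t in Set.Ioi (0:ℝ), Real.exp (-(x*t)) = 1/x := by
  have := MeasureTheory.integral_comp_mul_left_Ioi (fun u => Real.exp (-u)) 0 hx
  simp only [mul_zero] at this
  rw [show (fun t => Real.exp (-(x*t))) = (fun t => Real.exp (-(x*t))) from rfl]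
  calc ∫ t in Set.Ioi (0:ℝ), Real.exp (-(x*t))
      = x⁻¹ • ∫ u in Set.Ioi (0:ℝ), Real.exp (-u) := this
    _ = 1/x := by rw [integral_exp_neg_Ioi_zero]; simp [one_div]

lemma key_fubini {T : ℝ} (hT : 0 < T) :
    ∫ x in (0:ℝ)..T, Real.sin x / x
      = ∫ t in Set.Ioi (0:ℝ),
          (1 - Real.exp (-(T*t)) * (Real.cos T + t * Real.sin T)) / (1 + t^2) := by
  have hcont : Continuous (fun p : ℝ × ℝ => Real.sin p.1 * Real.exp (-(p.1 * p.2))) := by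
    fun_prop
  set μ := volume.restrict (Set.Ioc (0:ℝ) T) with hμ
  set ν := volume.restrict (Set.Ioi (0:ℝ)) with hν
  have h1f : AEStronglyMeasurable (Function.uncurry fun x t => Real.sin x * Real.exp (-(x*t)))
      (μ.prod ν) := hcont.aestronglyMeasurable
  have hintx : ∀ x : ℝ, 0 < x → Integrable (fun t => Real.sin x * Real.exp (-(x*t))) ν := by
    intro x hx
    have := (exp_neg_integrableOn_Ioi 0 hx).const_mul (Real.sin x)
    simpa [neg_mul] using this
  have hval : ∀ x : ℝ, 0 < x →
      (∫ t, ‖Real.sin x * Real.exp (-(x*t))‖ ∂ν) = |Real.sin x| / x := by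
    intro x hx
    have : (fun t => ‖Real.sin x * Real.exp (-(x*t))‖)
        = fun t => |Real.sin x| * Real.exp (-(x*t)) := by
      funext t
      rw [norm_mul, Real.norm_eq_abs, Real.norm_eq_abs, abs_of_pos (Real.exp_pos _)]
    rw [this, MeasureTheory.integral_const_mul, hν, integral_exp_neg_mul hx]
    ring
  have hint : Integrable (Function.uncurry fun x t => Real.sin x * Real.exp (-(x*t)))
      (μ.prod ν) := by
    rw [MeasureTheory.integrable_prod_iff h1f]
    constructor
    · filter_upwards [MeasureTheory.ae_restrict_mem measurableSet_Ioc] with x hx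
      exact hintx x hx.1
    · apply MeasureTheory.Integrable.mono' (g := fun _ : ℝ => (1:ℝ))
      · exact MeasureTheory.integrableOn_const measure_Ioc_lt_top.ne
      · exact (h1f.norm).integral_prod_right'
      · filter_upwards [MeasureTheory.ae_restrict_mem measurableSet_Ioc] with x hx
        simp only [Function.uncurry]
        rw [Real.norm_eq_abs, hval x hx.1,
          abs_of_nonneg (div_nonneg (abs_nonneg _) hx.1.le)]
        rw [div_le_one hx.1]
        calc |Real.sin x| ≤ |x| := Real.abs_sin_le_abs
          _ = x := abs_of_pos hx.1
  calc ∫ x in (0:ℝ)..T, Real.sin x / x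
      = ∫ x in Set.Ioc (0:ℝ) T, Real.sin x / x := by
        rw [intervalIntegral.integral_of_le hT.le]
    _ = ∫ x in Set.Ioc (0:ℝ) T, ∫ t in Set.Ioi (0:ℝ), Real.sin x * Real.exp (-(x*t)) := by
        apply MeasureTheory.setIntegral_congr_fun measurableSet_Ioc
        intro x hx
        beta_reduce
        rw [MeasureTheory.integral_const_mul]
        rw [integral_exp_neg_mul hx.1]
        ring
    _ = ∫ t in Set.Ioi (0:ℝ), ∫ x in Set.Ioc (0:ℝ) T, Real.sin x * Real.exp (-(x*t)) :=
        MeasureTheory.integral_integral_swap hint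
    _ = ∫ t in Set.Ioi (0:ℝ),
          (1 - Real.exp (-(T*t)) * (Real.cos T + t * Real.sin T)) / (1 + t^2) := by
        apply MeasureTheory.setIntegral_congr_fun measurableSet_Ioi
        intro t _
        beta_reduce
        rw [← intervalIntegral.integral_of_le hT.le, integral_sin_exp]

lemma rem_bound {T t : ℝ} (ht : 0 < t) :
    ‖Real.exp (-(T*t)) * (Real.cos T + t * Real.sin T) / (1 + t^2)‖
      ≤ 2 * Real.exp (-(T*t)) := by
  rw [Real.norm_eq_abs, abs_div, abs_mul, abs_of_pos (Real.exp_pos _),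
    abs_of_pos (by positivity : (0:ℝ) < 1 + t^2),
    div_le_iff₀ (by positivity : (0:ℝ) < 1 + t^2)]
  have h1 : |Real.cos T + t * Real.sin T| ≤ 1 + t := by
    calc |Real.cos T + t * Real.sin T| ≤ |Real.cos T| + |t * Real.sin T| := abs_add_le _ _
      _ ≤ 1 + t := by
        have hc := Real.abs_cos_le_one T
        have h2 : |t * Real.sin T| ≤ t := by
          rw [abs_mul, abs_of_pos ht]
          exact mul_le_of_le_one_right ht.le (Real.abs_sin_le_one T)
        linarith
  have h3 : 1 + t ≤ 2 * (1 + t^2) := by nlinarith [sq_nonneg (t - 1), ht.le]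
  have he := (Real.exp_pos (-(T*t))).le
  calc Real.exp (-(T*t)) * |Real.cos T + t * Real.sin T|
      ≤ Real.exp (-(T*t)) * (2 * (1 + t^2)) :=
        mul_le_mul_of_nonneg_left (h1.trans h3) he
    _ = 2 * Real.exp (-(T*t)) * (1 + t^2) := by ring

lemma integrable_rem {T : ℝ} (hT : 0 < T) :
    Integrable (fun t => Real.exp (-(T*t)) * (Real.cos T + t * Real.sin T) / (1 + t^2))
      (volume.restrict (Set.Ioi (0:ℝ))) := by
  apply MeasureTheory.Integrable.mono' (g := fun t => 2 * Real.exp (-(T*t)))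
  · have := (exp_neg_integrableOn_Ioi 0 hT).const_mul 2
    simpa [neg_mul] using this
  · apply Continuous.aestronglyMeasurable ?_ |>.restrict
    exact ((Real.continuous_exp.comp (by fun_prop)).mul (by fun_prop)).div (by fun_prop)
      (fun t => by positivity)
  · filter_upwards [MeasureTheory.ae_restrict_mem measurableSet_Ioi] with t ht
    exact rem_bound ht

lemma tendsto_integral_sin_div :
    Filter.Tendsto (fun T : ℝ => ∫ x in (0:ℝ)..T, Real.sin x / x) Filter.atTop
      (nhds (π/2)) := by
  set R : ℝ → ℝ := fun T => ∫ t in Set.Ioi (0:ℝ),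
    Real.exp (-(T*t)) * (Real.cos T + t * Real.sin T) / (1 + t^2) with hR
  have hRbound : ∀ T : ℝ, 0 < T → ‖R T‖ ≤ 2 * (1/T) := by
    intro T hT
    have hg : Integrable (fun t => 2 * Real.exp (-(T*t)))
        (volume.restrict (Set.Ioi (0:ℝ))) := by
      have := (exp_neg_integrableOn_Ioi 0 hT).const_mul 2
      simpa [neg_mul] using this
    have hae : ∀ᵐ t ∂(volume.restrict (Set.Ioi (0:ℝ))),
        ‖Real.exp (-(T*t)) * (Real.cos T + t * Real.sin T) / (1 + t^2)‖
          ≤ 2 * Real.exp (-(T*t)) := by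
      filter_upwards [MeasureTheory.ae_restrict_mem measurableSet_Ioi] with t ht
      exact rem_bound ht
    calc ‖R T‖ ≤ ∫ t in Set.Ioi (0:ℝ), 2 * Real.exp (-(T*t)) :=
        MeasureTheory.norm_integral_le_of_norm_le hg hae
      _ = 2 * (1/T) := by rw [MeasureTheory.integral_const_mul, integral_exp_neg_mul hT]
  have hR0 : Filter.Tendsto R Filter.atTop (nhds 0) := by
    have h1 : ∀ᶠ T in Filter.atTop, ‖R T‖ ≤ 2 * (1/T) := by
      filter_upwards [Filter.eventually_gt_atTop 0] with T hT
      exact hRbound T hT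
    have h2 : Filter.Tendsto (fun T : ℝ => 2 * (1/T)) Filter.atTop (nhds 0) := by
      simpa [one_div] using tendsto_inv_atTop_zero.const_mul (2:ℝ)
    exact squeeze_zero_norm' h1 h2
  have heq : ∀ᶠ T in Filter.atTop, π/2 - R T = ∫ x in (0:ℝ)..T, Real.sin x / x := by
    filter_upwards [Filter.eventually_gt_atTop 0] with T hT
    rw [key_fubini hT]
    have h1 : Integrable (fun t : ℝ => (1 + t^2)⁻¹)
        (volume.restrict (Set.Ioi (0:ℝ))) := integrable_inv_one_add_sq.integrableOn
    have hsplit : ∀ t : ℝ,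
        (1 - Real.exp (-(T*t)) * (Real.cos T + t * Real.sin T)) / (1 + t^2)
          = (1 + t^2)⁻¹ - Real.exp (-(T*t)) * (Real.cos T + t * Real.sin T) / (1 + t^2) := by
      intro t
      rw [sub_div]
      congr 1
      rw [one_div]
    simp_rw [hsplit]
    rw [MeasureTheory.integral_sub h1 (integrable_rem hT), integral_Ioi_inv_one_add_sq,
      Real.arctan_zero, sub_zero]
  have := (tendsto_const_nhds (x := π/2) (f := Filter.atTop (α := ℝ))).sub hR0
  rw [sub_zero] at this
  exact this.congr' heq

noncomputable def gg (c x : ℝ) : ℝ := c * _root_.sinc (c * x / π)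

lemma gg_cont (c : ℝ) : Continuous (gg c) :=
  continuous_const.mul (continuous_sinc.comp (by fun_prop))

lemma gg_even (c x : ℝ) : gg c (-x) = gg c x := by
  unfold gg
  rw [show c * -x / π = -(c * x / π) by ring, sinc_even]

lemma gg_neg (c x : ℝ) : gg (-c) x = - gg c x := by
  unfold gg
  rw [show -c * x / π = -(c * x / π) by ring, sinc_even]
  ring

lemma gg_eq {c x : ℝ} (hx : x ≠ 0) (hc : c ≠ 0) : gg c x = Real.sin (c * x) / x := by
  unfold gg _root_.sinc
  rw [if_neg (div_ne_zero (mul_ne_zero hc hx) Real.pi_ne_zero),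
    mul_div_cancel₀ _ Real.pi_ne_zero]
  field_simp

lemma gg_one (T : ℝ) : ∫ x in (0:ℝ)..T, gg 1 x = ∫ x in (0:ℝ)..T, Real.sin x / x := by
  apply intervalIntegral.integral_congr_ae
  have h0 : ∀ᵐ x : ℝ, x ≠ 0 := by
    rw [MeasureTheory.ae_iff]
    simp [Set.setOf_eq_eq_singleton']
  filter_upwards [h0] with x hx _
  rw [gg_eq hx one_ne_zero, one_mul]

lemma tendsto_gg_pos {c : ℝ} (hc : 0 < c) :
    Filter.Tendsto (fun T : ℝ => ∫ x in (0:ℝ)..T, gg c x) Filter.atTop (nhds (π/2)) := by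
  have h1 : Filter.Tendsto (fun T : ℝ => ∫ x in (0:ℝ)..T, gg 1 x) Filter.atTop
      (nhds (π/2)) := tendsto_integral_sin_div.congr (fun T => (gg_one T).symm)
  have h2 : ∀ T : ℝ, ∫ x in (0:ℝ)..T, gg c x = ∫ u in (0:ℝ)..(c*T), gg 1 u := by
    intro T
    have h3 : ∀ x : ℝ, gg c x = c * gg 1 (c * x) := by
      intro x
      unfold gg
      rw [one_mul, one_mul]
    simp_rw [h3]
    rw [intervalIntegral.integral_const_mul,
      intervalIntegral.integral_comp_mul_left (fun u => gg 1 u) hc.ne']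
    rw [mul_zero, smul_eq_mul]
    field_simp
  have h4 : Filter.Tendsto (fun T : ℝ => c * T) Filter.atTop Filter.atTop :=
    Filter.Tendsto.const_mul_atTop hc Filter.tendsto_id
  have := h1.comp h4
  exact this.congr (fun T => (h2 T).symm)

lemma tendsto_gg_neg {c : ℝ} (hc : c < 0) :
    Filter.Tendsto (fun T : ℝ => ∫ x in (0:ℝ)..T, gg c x) Filter.atTop (nhds (-(π/2))) := by
  have h1 := tendsto_gg_pos (c := -c) (by linarith)
  have h2 : ∀ T : ℝ, ∫ x in (0:ℝ)..T, gg c x = -∫ x in (0:ℝ)..T, gg (-c) x := by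
    intro T
    rw [← intervalIntegral.integral_neg]
    congr 1
    funext x
    rw [gg_neg, neg_neg]  -- gg (-c) x = - gg c x so -gg(-c) x = gg c x? check
  exact (h1.neg).congr (fun T => (h2 T).symm)

lemma integral_gg_symm (c T : ℝ) :
    ∫ x in (-T)..T, gg c x = 2 * ∫ x in (0:ℝ)..T, gg c x := by
  have h1 : ∫ x in (-T)..(0:ℝ), gg c x = ∫ x in (0:ℝ)..T, gg c x := by
    have h2 := intervalIntegral.integral_comp_neg (a := (0:ℝ)) (b := T) (fun x => gg c x)
    simp_rw [gg_even] at h2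
    rw [neg_zero] at h2
    exact h2.symm
  rw [← intervalIntegral.integral_add_adjacent_intervals
    (((gg_cont c).intervalIntegrable (-T) 0)) (((gg_cont c).intervalIntegrable 0 T)), h1]
  ring

lemma pointwise_id {W ξ δ : ℝ} (hW : 0 < W) (hδ : δ = 1 / (2 * W))
    (ha : 2*π*(W+ξ) ≠ 0) (hb : 2*π*(W-ξ) ≠ 0) (x : ℝ) :
    _root_.sinc (x/δ) * Real.cos (2*π*ξ*x)
      = (gg (2*π*(W+ξ)) x + gg (2*π*(W-ξ)) x) / (4*π*W) := by
  have hWne : W ≠ 0 := hW.ne'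
  have hδ0 : δ ≠ 0 := by rw [hδ]; positivity
  rcases eq_or_ne x 0 with rfl | hx
  · simp only [zero_div, mul_zero, Real.cos_zero, mul_one]
    unfold gg
    rw [mul_zero, zero_div]
    unfold _root_.sinc
    simp only [mul_zero, zero_div, eq_self_iff_true, if_true]
    field_simp
    ring
  · have hxδ : x / δ ≠ 0 := div_ne_zero hx hδ0
    unfold _root_.sinc
    rw [if_neg hxδ, gg_eq hx ha, gg_eq hx hb, ← add_div]
    have hkey : Real.sin (2*π*(W+ξ)*x) + Real.sin (2*π*(W-ξ)*x)
        = 2 * Real.sin (2*π*W*x) * Real.cos (2*π*ξ*x) := by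
      rw [show 2*π*(W+ξ)*x = 2*π*W*x + 2*π*ξ*x by ring,
        show 2*π*(W-ξ)*x = 2*π*W*x - 2*π*ξ*x by ring,
        Real.sin_add, Real.sin_sub]
      ring
    rw [hkey]
    have hπδ : π * (x / δ) = 2*π*W*x := by
      rw [hδ]
      field_simp
    rw [hπδ]
    have h2 : 2*π*W*x ≠ 0 := by
      apply mul_ne_zero (mul_ne_zero (mul_ne_zero two_ne_zero Real.pi_ne_zero) hWne) hx
    field_simp
    ring

lemma real_combo {W ξ δ : ℝ} (hW : 0 < W) (hδ : δ = 1 / (2 * W))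
    (ha : 2*π*(W+ξ) ≠ 0) (hb : 2*π*(W-ξ) ≠ 0) {LA LB : ℝ}
    (hA : Filter.Tendsto (fun T : ℝ => ∫ x in (0:ℝ)..T, gg (2*π*(W+ξ)) x)
      Filter.atTop (nhds LA))
    (hB : Filter.Tendsto (fun T : ℝ => ∫ x in (0:ℝ)..T, gg (2*π*(W-ξ)) x)
      Filter.atTop (nhds LB)) :
    Filter.Tendsto (fun T : ℝ => ∫ x in (-T)..T, _root_.sinc (x/δ) * Real.cos (2*π*ξ*x))
      Filter.atTop (nhds ((2*LA + 2*LB)/(4*π*W))) := by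
  have heq : ∀ T : ℝ, ∫ x in (-T)..T, _root_.sinc (x/δ) * Real.cos (2*π*ξ*x)
      = ((2 * ∫ x in (0:ℝ)..T, gg (2*π*(W+ξ)) x)
          + 2 * ∫ x in (0:ℝ)..T, gg (2*π*(W-ξ)) x) / (4*π*W) := by
    intro T
    calc ∫ x in (-T)..T, _root_.sinc (x/δ) * Real.cos (2*π*ξ*x)
        = ∫ x in (-T)..T, (gg (2*π*(W+ξ)) x + gg (2*π*(W-ξ)) x) / (4*π*W) := by
          apply intervalIntegral.integral_congr
          intro x _
          exact pointwise_id hW hδ ha hb x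
      _ = ((∫ x in (-T)..T, gg (2*π*(W+ξ)) x) + ∫ x in (-T)..T, gg (2*π*(W-ξ)) x) / (4*π*W) := by
          rw [intervalIntegral.integral_div, intervalIntegral.integral_add
            (((gg_cont _).intervalIntegrable _ _)) (((gg_cont _).intervalIntegrable _ _))]
      _ = ((2 * ∫ x in (0:ℝ)..T, gg (2*π*(W+ξ)) x)
          + 2 * ∫ x in (0:ℝ)..T, gg (2*π*(W-ξ)) x) / (4*π*W) := by
          rw [integral_gg_symm, integral_gg_symm]
  have := (((hA.const_mul 2).add (hB.const_mul 2)).div_const (4*π*W))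
  exact this.congr (fun T => (heq T).symm)

lemma complex_reduction {δ : ℝ} (hδ0 : δ ≠ 0) (ξ T : ℝ) :
    (∫ x in (-T)..T, (_root_.sinc (x / δ) : ℂ) * Complex.exp (-2 * (π : ℂ) * Complex.I * ξ * x))
      = ((∫ x in (-T)..T, _root_.sinc (x/δ) * Real.cos (2*π*ξ*x) : ℝ) : ℂ) := by
  set f : ℝ → ℂ := fun x => (_root_.sinc (x / δ) : ℂ) * Complex.exp (-2 * (π : ℂ) * Complex.I * ξ * x)
    with hf
  have hfc : Continuous f := by
    apply Continuous.mul
    · exact Complex.continuous_ofReal.comp (continuous_sinc.comp (continuous_id.div_const δ))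
    · exact Complex.continuous_exp.comp (by fun_prop)
  have h1 : (∫ x in (-T)..T, f (-x)) = ∫ x in (-T)..T, f x := by
    have h2 := intervalIntegral.integral_comp_neg (a := -T) (b := T) f
    simpa using h2
  have hpt : ∀ x : ℝ, (f x + f (-x)) / 2
      = ((_root_.sinc (x/δ) * Real.cos (2*π*ξ*x) : ℝ) : ℂ) := by
    intro x
    rw [hf]
    simp only
    rw [show -x / δ = -(x/δ) by ring, sinc_even]
    have e1 : (-2 * (π : ℂ) * Complex.I * ξ * x) = -(((2*π*ξ*x : ℝ) : ℂ) * Complex.I) := by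
      push_cast; ring
    have e2 : (-2 * (π : ℂ) * Complex.I * ξ * ((-x : ℝ) : ℂ)) = ((2*π*ξ*x : ℝ) : ℂ) * Complex.I := by
      push_cast; ring
    rw [Complex.ofReal_mul (_root_.sinc (x/δ)) (Real.cos (2*π*ξ*x)), Complex.ofReal_cos,
      Complex.cos, e1, e2]
    ring
  calc ∫ x in (-T)..T, f x
      = ((∫ x in (-T)..T, f x) + ∫ x in (-T)..T, f (-x)) / 2 := by rw [h1]; ring
    _ = (∫ x in (-T)..T, (f x + f (-x))) / 2 := by
        have hfn : Continuous (fun x : ℝ => f (-x)) := by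
          exact hfc.comp continuous_neg
        rw [intervalIntegral.integral_add (hfc.intervalIntegrable _ _)
          (hfn.intervalIntegrable _ _)]
    _ = ∫ x in (-T)..T, (f x + f (-x)) / 2 := (intervalIntegral.integral_div 2 _).symm
    _ = ∫ x in (-T)..T, ((_root_.sinc (x/δ) * Real.cos (2*π*ξ*x) : ℝ) : ℂ) := by
        apply intervalIntegral.integral_congr
        intro x _
        exact hpt x
    _ = ((∫ x in (-T)..T, _root_.sinc (x/δ) * Real.cos (2*π*ξ*x) : ℝ) : ℂ) :=
        intervalIntegral.integral_ofReal

/-- Improper Fourier transform of the _root_.sinc function: with `δ = 1/(2W)`,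
`lim_{T→∞} ∫_{−T}^{T} _root_.sinc(x/δ) e^{−2πiξx} dx` equals `δ` for `|ξ| < W` and `0` for
`|ξ| > W` (i.e. the transform is `δ·rect(ξδ)`). -/
theorem sinc_fourier_transform (W : ℝ) (hW : 0 < W) (δ : ℝ) (hδ : δ = 1 / (2 * W))
    (ξ : ℝ) :
    (|ξ| < W →
      Tendsto
        (fun T : ℝ => ∫ x in (-T)..T,
          (_root_.sinc (x / δ) : ℂ) * Complex.exp (-2 * (π : ℂ) * Complex.I * ξ * x))
        atTop (nhds (δ : ℂ))) ∧
    (|ξ| > W →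
      Tendsto
        (fun T : ℝ => ∫ x in (-T)..T,
          (_root_.sinc (x / δ) : ℂ) * Complex.exp (-2 * (π : ℂ) * Complex.I * ξ * x))
        atTop (nhds 0)) := by
  have hδ0 : δ ≠ 0 := by rw [hδ]; positivity
  have hπ := Real.pi_pos
  constructor
  · intro hlt
    obtain ⟨h1, h2⟩ := abs_lt.mp hlt
    have ha : 0 < 2*π*(W+ξ) := by
      apply mul_pos (by positivity)
      linarith
    have hb : 0 < 2*π*(W-ξ) := by
      apply mul_pos (by positivity)
      linarith
    have hreal := real_combo hW hδ ha.ne' hb.ne' (tendsto_gg_pos ha) (tendsto_gg_pos hb)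
    have hval : (2*(π/2) + 2*(π/2))/(4*π*W) = δ := by
      rw [hδ]
      field_simp
      ring
    rw [hval] at hreal
    have hc := (Complex.continuous_ofReal.tendsto δ).comp hreal
    apply hc.congr
    intro T
    simp only [Function.comp_apply]
    exact (complex_reduction hδ0 ξ T).symm
  · intro hgt
    rcases lt_abs.mp hgt with h1 | h1
    · have ha : 0 < 2*π*(W+ξ) := by
        apply mul_pos (by positivity)
        linarith
      have hb : 2*π*(W-ξ) < 0 := by
        apply mul_neg_of_pos_of_neg (by positivity)
        linarith
      have hreal := real_combo hW hδ ha.ne' hb.ne (tendsto_gg_pos ha) (tendsto_gg_neg hb)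
      have hval : (2*(π/2) + 2*(-(π/2)))/(4*π*W) = 0 := by
        rw [show 2*(π/2) + 2*(-(π/2)) = 0 by ring, zero_div]
      rw [hval] at hreal
      have hc := (Complex.continuous_ofReal.tendsto 0).comp hreal
      rw [Complex.ofReal_zero] at hc
      apply hc.congr
      intro T
      simp only [Function.comp_apply]
      exact (complex_reduction hδ0 ξ T).symm
    · have ha : 2*π*(W+ξ) < 0 := by
        apply mul_neg_of_pos_of_neg (by positivity)
        linarith
      have hb : 0 < 2*π*(W-ξ) := by
        apply mul_pos (by positivity)
        linarith
      have hreal := real_combo hW hδ ha.ne hb.ne' (tendsto_gg_neg ha) (tendsto_gg_pos hb)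
      have hval : (2*(-(π/2)) + 2*(π/2))/(4*π*W) = 0 := by
        rw [show 2*(-(π/2)) + 2*(π/2) = 0 by ring, zero_div]
      rw [hval] at hreal
      have hc := (Complex.continuous_ofReal.tendsto 0).comp hreal
      rw [Complex.ofReal_zero] at hc
      apply hc.congr
      intro T
      simp only [Function.comp_apply]
      exact (complex_reduction hδ0 ξ T).symm
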